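/- Let G be a simple undirected graph and let v be a vertex dominated by a neighbor u (i.e., u is adjacent to v and every neighbor of u is adjacent to v or equals v). If there exists a minimum 3-path vertex cover of G not containing v, then there exists a minimum 3-path vertex cover C' of G such that v ∉ C', u ∉ C', and N({u,v}) ⊆ C'. -/
import Mathlib


open Finset

variable {V : Type*}

def IsP3VC (G : SimpleGraph V) (C : Finset V) : Prop :=
  ∀ a b c : V, G.Adj a b → G.Adj b c → a ≠ c → a ∈ C ∨ b ∈ C ∨ c ∈ C

def IsMinP3VC (G : SimpleGraph V) (C : Finset V) : Prop :=
  IsP3VC G C ∧ ∀ D : Finset V, IsP3VC G D → C.card ≤ D.card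

def NSet [Fintype V] [DecidableEq V] (G : SimpleGraph V) [DecidableRel G.Adj]
    (S : Finset V) : Finset V :=
  Finset.univ.filter (fun w => w ∉ S ∧ ∃ x ∈ S, G.Adj w x)

/-- if `v` is dominated by its neighbor `u` and some minimum
3-path vertex cover avoids `v`, then some minimum 3-path vertex cover `C'`
avoids both `u` and `v` and contains `N({u,v})`. -/
theorem stmt0 [Fintype V] [DecidableEq V] (G : SimpleGraph V) [DecidableRel G.Adj]
    (u v : V) (hadj : G.Adj u v)
    (hdom : ∀ w : V, G.Adj u w → w = v ∨ G.Adj v w)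
    (hex : ∃ C : Finset V, IsMinP3VC G C ∧ v ∉ C) :
    ∃ C' : Finset V, IsMinP3VC G C' ∧ v ∉ C' ∧ u ∉ C' ∧ NSet G {u, v} ⊆ C' := by
  obtain ⟨C, hC, hvC⟩ := hex
  set N := NSet G {u, v} with hNdef
  have hmemN : ∀ w, w ∈ N ↔ w ≠ u ∧ w ≠ v ∧ (G.Adj w u ∨ G.Adj w v) := by
    intro w
    simp only [hNdef, NSet, Finset.mem_filter, Finset.mem_univ, true_and,
      Finset.mem_insert, Finset.mem_singleton, not_or]
    constructor
    · rintro ⟨⟨h1, h2⟩, x, hx, hadjx⟩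
      rcases hx with hx | hx <;> subst hx
      · exact ⟨h1, h2, Or.inl hadjx⟩
      · exact ⟨h1, h2, Or.inr hadjx⟩
    · rintro ⟨h1, h2, h3 | h3⟩
      · exact ⟨⟨h1, h2⟩, u, Or.inl rfl, h3⟩
      · exact ⟨⟨h1, h2⟩, v, Or.inr rfl, h3⟩
  have huN : u ∉ N := by simp [hmemN]
  have hvN : v ∉ N := by simp [hmemN]
  have hNadjv : ∀ w ∈ N, G.Adj v w := by
    intro w hw
    obtain ⟨hwu, hwv, hw3 | hw3⟩ := (hmemN w).mp hw
    · rcases hdom w hw3.symm with h | h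
      · exact absurd h hwv
      · exact h
    · exact hw3.symm
  have hNmem : ∀ w, w ≠ u → w ≠ v → G.Adj v w → w ∈ N := by
    intro w h1 h2 h3
    exact (hmemN w).mpr ⟨h1, h2, Or.inr h3.symm⟩
  refine ⟨C.erase u ∪ N, ⟨?_, ?_⟩, ?_, ?_, ?_⟩
  · -- P3VC
    intro a b c hab hbc hac
    by_cases hbu : b = u
    · rw [hbu] at hab hbc
      by_cases hav : a = v
      · right; right
        have hcv : c ≠ v := fun h => hac (hav.trans h.symm)
        rcases hdom c hbc with h | h
        · exact absurd h hcv
        · exact Finset.mem_union_right _ (hNmem c (fun h => (h ▸ hbc).ne rfl) hcv h)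
      · left
        refine Finset.mem_union_right _ (hNmem a (fun h => (h ▸ hab).ne' rfl) hav ?_)
        rcases hdom a hab.symm with h | h
        · exact absurd h hav
        · exact h
    · by_cases hbv : b = v
      · rw [hbv] at hab hbc
        by_cases hau : a = u
        · right; right
          refine Finset.mem_union_right _
            (hNmem c (fun h => hac (hau.trans h.symm)) (fun h => (h ▸ hbc).ne' rfl) hbc)
        · left
          exact Finset.mem_union_right _
            (hNmem a hau (fun h => (h ▸ hab).ne' rfl) hab.symm)
      · -- b ∉ {u, v}
        by_cases hau : a = u
        · rw [hau] at hab
          right; left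
          refine Finset.mem_union_right _ (hNmem b hbu hbv ?_)
          rcases hdom b hab with h | h
          · exact absurd h hbv
          · exact h
        · by_cases hav : a = v
          · rw [hav] at hab
            right; left
            exact Finset.mem_union_right _ (hNmem b hbu hbv hab)
          · by_cases hcu : c = u
            · rw [hcu] at hbc
              right; left
              refine Finset.mem_union_right _ (hNmem b hbu hbv ?_)
              rcases hdom b hbc.symm with h | h
              · exact absurd h hbv
              · exact h
            · by_cases hcv : c = v
              · rw [hcv] at hbc
                right; left
                exact Finset.mem_union_right _ (hNmem b hbu hbv hbc.symm)
              · rcases hC.1 a b c hab hbc hac with h | h | h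
                · exact Or.inl (Finset.mem_union_left _ (Finset.mem_erase.mpr ⟨hau, h⟩))
                · exact Or.inr (Or.inl (Finset.mem_union_left _ (Finset.mem_erase.mpr ⟨hbu, h⟩)))
                · exact Or.inr (Or.inr (Finset.mem_union_left _ (Finset.mem_erase.mpr ⟨hcu, h⟩)))
  · -- minimality
    intro D hD
    have hcard : (C.erase u ∪ N).card ≤ C.card := by
      have hsub : C.erase u ∪ N ⊆ C.erase u ∪ (N \ C) := by
        intro x hx
        rcases Finset.mem_union.mp hx with hx | hx
        · exact Finset.mem_union_left _ hx
        · by_cases hxC : x ∈ C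
          · exact Finset.mem_union_left _
              (Finset.mem_erase.mpr ⟨((hmemN x).mp hx).1, hxC⟩)
          · exact Finset.mem_union_right _ (Finset.mem_sdiff.mpr ⟨hx, hxC⟩)
      by_cases huC : u ∈ C
      · have h1 : (N \ C).card ≤ 1 := by
          apply Finset.card_le_one.mpr
          intro a ha b hb
          obtain ⟨haN, haC⟩ := Finset.mem_sdiff.mp ha
          obtain ⟨hbN, hbC⟩ := Finset.mem_sdiff.mp hb
          by_contra hne
          rcases hC.1 a v b (hNadjv a haN).symm (hNadjv b hbN) hne with h | h | h
          · exact haC h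
          · exact hvC h
          · exact hbC h
        calc (C.erase u ∪ N).card ≤ (C.erase u ∪ (N \ C)).card :=
              Finset.card_le_card hsub
          _ ≤ (C.erase u).card + (N \ C).card := Finset.card_union_le _ _
          _ ≤ (C.card - 1) + 1 := by
              rw [Finset.card_erase_of_mem huC]; omega
          _ ≤ C.card := by
              have := Finset.card_pos.mpr ⟨u, huC⟩; omega
      · have hNC : N ⊆ C := by
          intro w hw
          by_contra hwC
          obtain ⟨hwu, hwv, _⟩ := (hmemN w).mp hw
          rcases hC.1 u v w hadj (hNadjv w hw) (Ne.symm hwu) with h | h | h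
          · exact huC h
          · exact hvC h
          · exact hwC h
        apply Finset.card_le_card
        intro x hx
        rcases Finset.mem_union.mp hx with hx | hx
        · exact Finset.mem_of_mem_erase hx
        · exact hNC hx
    exact hcard.trans (hC.2 D hD)
  · simp [hvC, hvN]
  · simp [huN]
  · exact fun x hx => Finset.mem_union_right _ hx
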